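/- If X is a θⁿ-Urysohn topological space and A ⊆ X, then |cl_γⁿ(A)| ≤ |A|^κ ≤ 2^κ where κ = ψ_γⁿ(X) · t_γⁿ(X); in particular |cl_γⁿ(A)| ≤ 2^(ψ_γⁿ(X) t_γⁿ(X)) when |A| ≤ 2^(ψ_γⁿ(X) t_γⁿ(X)). -/

import Mathlib

open Set Topology Cardinal

universe u v

def thetaCl (X : Type u) [TopologicalSpace X] (A : Set X) : Set X :=
  {x | ∀ U : Set X, IsOpen U → x ∈ U → (closure U ∩ A).Nonempty}

def thetaClN (X : Type u) [TopologicalSpace X] (n : ℕ) (A : Set X) : Set X :=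
  (thetaCl X)^[n] A

def gammaCl (X : Type u) [TopologicalSpace X] (n : ℕ) (A : Set X) : Set X :=
  {x | ∀ U : Set X, IsOpen U → x ∈ U → (thetaClN X n U ∩ A).Nonempty}

def ThetaUrysohn (X : Type u) [TopologicalSpace X] (n : ℕ) : Prop :=
  ∀ x y : X, x ≠ y → ∃ U V : Set X, IsOpen U ∧ IsOpen V ∧ x ∈ U ∧ y ∈ V ∧
    thetaClN X n U ∩ thetaClN X n V = ∅

noncomputable def tGamma (X : Type u) [TopologicalSpace X] (n : ℕ) : Cardinal.{u} :=
  sInf {κ | ∀ (x : X) (A : Set X), x ∈ gammaCl X n A →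
    ∃ B ⊆ A, #B ≤ κ ∧ x ∈ gammaCl X n B}

noncomputable def psiGamma (X : Type u) [TopologicalSpace X] (n : ℕ) : Cardinal.{u} :=
  ⨆ x : X, sInf {κ | ∃ B : Set (Set X), #B ≤ κ ∧ (∀ U ∈ B, IsOpen U ∧ x ∈ U) ∧
    (⋂ U ∈ B, gammaCl X n (thetaClN X n U)) = {x}}

section Aux

variable {X : Type u} [TopologicalSpace X] {n : ℕ}

lemma thetaCl_mono {A B : Set X} (h : A ⊆ B) : thetaCl X A ⊆ thetaCl X B := by
  intro x hx U hU hxU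
  obtain ⟨y, hy1, hy2⟩ := hx U hU hxU
  exact ⟨y, hy1, h hy2⟩

lemma subset_thetaCl (A : Set X) : A ⊆ thetaCl X A := by
  intro x hx U hU hxU
  exact ⟨x, subset_closure hxU, hx⟩

lemma thetaClN_mono {A B : Set X} (h : A ⊆ B) : thetaClN X n A ⊆ thetaClN X n B := by
  induction n with
  | zero => exact h
  | succ m ih =>
    show (thetaCl X)^[m + 1] A ⊆ (thetaCl X)^[m + 1] B
    rw [Function.iterate_succ_apply', Function.iterate_succ_apply']
    exact thetaCl_mono ih

lemma subset_thetaClN (A : Set X) : A ⊆ thetaClN X n A := by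
  induction n with
  | zero => exact subset_rfl
  | succ m ih =>
    show A ⊆ (thetaCl X)^[m + 1] A
    rw [Function.iterate_succ_apply']
    exact ih.trans (subset_thetaCl _)

lemma gammaCl_mono {A B : Set X} (h : A ⊆ B) : gammaCl X n A ⊆ gammaCl X n B := by
  intro x hx U hU hxU
  obtain ⟨y, hy1, hy2⟩ := hx U hU hxU
  exact ⟨y, hy1, h hy2⟩

lemma subset_gammaCl (A : Set X) : A ⊆ gammaCl X n A := by
  intro x hx U hU hxU
  exact ⟨x, subset_thetaClN U hxU, hx⟩

/-- Under `ThetaUrysohn`, distinct points can be γ-separated. -/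
lemma exists_open_not_mem_gammaCl (hX : ThetaUrysohn X n) {x y : X} (h : x ≠ y) :
    ∃ U : Set X, IsOpen U ∧ x ∈ U ∧ y ∉ gammaCl X n (thetaClN X n U) := by
  obtain ⟨U, V, hU, hV, hxU, hyV, hd⟩ := hX x y h
  refine ⟨U, hU, hxU, fun hy => ?_⟩
  obtain ⟨z, hz1, hz2⟩ := hy V hV hyV
  exact absurd hd (Set.Nonempty.ne_empty ⟨z, hz2, hz1⟩)

/-- Witness for the tightness. -/
lemma t_witness {x : X} {A : Set X} (hx : x ∈ gammaCl X n A) :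
    ∃ B ⊆ A, #B ≤ tGamma X n ∧ x ∈ gammaCl X n B := by
  have hne : {κ | ∀ (x : X) (A : Set X), x ∈ gammaCl X n A →
      ∃ B ⊆ A, #B ≤ κ ∧ x ∈ gammaCl X n B}.Nonempty :=
    ⟨#X, fun x A hx => ⟨A, subset_rfl, mk_set_le A, hx⟩⟩
  exact csInf_mem hne x A hx

/-- Witness for the pseudocharacter. -/
lemma psi_witness (hX : ThetaUrysohn X n) (x : X) :
    ∃ B : Set (Set X), #B ≤ psiGamma X n ∧ (∀ U ∈ B, IsOpen U ∧ x ∈ U) ∧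
      (⋂ U ∈ B, gammaCl X n (thetaClN X n U)) = {x} := by
  have hne : {κ | ∃ B : Set (Set X), #B ≤ κ ∧ (∀ U ∈ B, IsOpen U ∧ x ∈ U) ∧
      (⋂ U ∈ B, gammaCl X n (thetaClN X n U)) = {x}}.Nonempty := by
    refine ⟨#{U : Set X | IsOpen U ∧ x ∈ U}, {U : Set X | IsOpen U ∧ x ∈ U}, le_rfl,
      fun U hU => hU, ?_⟩
    apply Set.eq_singleton_iff_unique_mem.mpr
    constructor
    · exact Set.mem_biInter fun U hU =>
        subset_gammaCl _ (subset_thetaClN U hU.2)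
    · intro y hy
      by_contra hyx
      obtain ⟨U, hU, hxU, hnot⟩ := exists_open_not_mem_gammaCl hX (Ne.symm hyx)
      exact hnot ((Set.mem_iInter₂.mp hy) U ⟨hU, hxU⟩)
  obtain ⟨B, hB1, hB2, hB3⟩ := csInf_mem hne
  exact ⟨B, hB1.trans (le_ciSup (Cardinal.bddAbove_range _) x), hB2, hB3⟩

end Aux
section Key

variable {X : Type u} [TopologicalSpace X] {n : ℕ}

lemma key_nontrivial (hX : ThetaUrysohn X n) [Nontrivial X] (A : Set X) :
    #(gammaCl X n A) ≤ #A ^ (psiGamma X n * tGamma X n) := by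
  set P := (psiGamma X n).out with hP
  set T := (tGamma X n).out with hT
  have construct : ∀ x : ↥(gammaCl X n A), ∃ f : P × T → ↥A,
      (⋂ p : P, gammaCl X n (Set.range fun t : T => ((f (p, t) : X)))) = {(x : X)} := by
    rintro ⟨x, hx⟩
    obtain ⟨Bx, hBA, hBt, hxB⟩ := t_witness hx
    obtain ⟨V, hVψ, hVo, hVeq⟩ := psi_witness hX x
    have hVne : V.Nonempty := by
      rcases Set.eq_empty_or_nonempty V with h | h
      · exfalso
        rw [h] at hVeq
        simp only [Set.mem_empty_iff_false, Set.iInter_of_empty, Set.iInter_univ] at hVeq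
        obtain ⟨y, hy⟩ := exists_ne x
        exact hy (by rw [← Set.mem_singleton_iff, ← hVeq]; trivial)
      · exact h
    set Φ : Set (Set X) := (fun U => thetaClN X n U ∩ Bx) '' V with hΦ
    have hΦne : Φ.Nonempty := hVne.image _
    have hΦcard : #Φ ≤ psiGamma X n := (mk_image_le).trans hVψ
    -- each member of Φ is nonempty, a subset of A, of size ≤ tGamma;
    have hSne : ∀ S ∈ Φ, S.Nonempty := by
      rintro S ⟨U, hU, rfl⟩
      exact hxB U (hVo U hU).1 (hVo U hU).2
    have hSsub : ∀ S ∈ Φ, S ⊆ A := by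
      rintro S ⟨U, hU, rfl⟩
      exact Set.inter_subset_right.trans hBA
    have hScard : ∀ S ∈ Φ, #S ≤ tGamma X n := by
      rintro S ⟨U, hU, rfl⟩
      exact (mk_le_mk_of_subset Set.inter_subset_right).trans hBt
    -- x belongs to gammaCl of each member of Φ
    have hxS : ∀ S ∈ Φ, x ∈ gammaCl X n S := by
      rintro S ⟨U, hU, rfl⟩ W hW hxW
      obtain ⟨b, hb1, hb2⟩ := hxB (W ∩ U) (hW.inter (hVo U hU).1) ⟨hxW, (hVo U hU).2⟩
      exact ⟨b, thetaClN_mono Set.inter_subset_left hb1,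
        thetaClN_mono Set.inter_subset_right hb1, hb2⟩
    -- the intersection of gammaCl over Φ is {x}
    have hΦeq : (⋂ S ∈ Φ, gammaCl X n S) = {x} := by
      apply Set.eq_singleton_iff_unique_mem.mpr
      refine ⟨Set.mem_biInter hxS, fun y hy => ?_⟩
      have : y ∈ ⋂ U ∈ V, gammaCl X n (thetaClN X n U) := by
        apply Set.mem_biInter
        intro U hU
        have hmem : thetaClN X n U ∩ Bx ∈ Φ := ⟨U, hU, rfl⟩
        exact gammaCl_mono Set.inter_subset_left ((Set.mem_iInter₂.mp hy) _ hmem)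
      rw [hVeq] at this
      exact this
    -- surjections
    have hPcard : #Φ ≤ #P := by rw [hP, mk_out]; exact hΦcard
    obtain ⟨e⟩ := Cardinal.le_def _ _ |>.mp hPcard
    have : Nonempty ↥Φ := hΦne.to_subtype
    set u : P → ↥Φ := Function.invFun e with hu
    have hus : Function.Surjective u := Function.invFun_surjective e.injective
    have hv : ∀ S : ↥Φ, ∃ v : T → ↥(S : Set X), Function.Surjective v := by
      intro S
      have h1 : #(S : Set X) ≤ #T := by rw [hT, mk_out]; exact hScard S S.2
      obtain ⟨eS⟩ := Cardinal.le_def _ _ |>.mp h1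
      have : Nonempty ↥(S : Set X) := (hSne S S.2).to_subtype
      exact ⟨Function.invFun eS, Function.invFun_surjective eS.injective⟩
    choose v hvs using hv
    refine ⟨fun pt => ⟨(v (u pt.1) pt.2 : X), hSsub _ (u pt.1).2 (v (u pt.1) pt.2).2⟩, ?_⟩
    have hrange : ∀ p : P, (Set.range fun t : T => ((v (u p) t : X))) = ((u p : Set X)) := by
      intro p
      ext z
      constructor
      · rintro ⟨t, rfl⟩; exact (v (u p) t).2
      · intro hz
        obtain ⟨t, ht⟩ := hvs (u p) ⟨z, hz⟩
        exact ⟨t, congrArg Subtype.val ht⟩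
    have : (⋂ p : P, gammaCl X n ((u p : Set X))) = ⋂ S ∈ Φ, gammaCl X n S := by
      ext z
      simp only [Set.mem_iInter]
      constructor
      · intro h S hS
        obtain ⟨p, hp⟩ := hus ⟨S, hS⟩
        have := h p
        rw [hp] at this
        exact this
      · intro h p
        exact h _ (u p).2
    calc (⋂ p : P, gammaCl X n (Set.range fun t : T => ((v (u p) t : X))))
        = ⋂ p : P, gammaCl X n ((u p : Set X)) := by
          exact Set.iInter_congr fun p => by rw [hrange p]
      _ = ⋂ S ∈ Φ, gammaCl X n S := this
      _ = {x} := hΦeq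
  choose F hF using construct
  have hinj : Function.Injective F := by
    intro a b hab
    have : ({(a : X)} : Set X) = {(b : X)} := by rw [← hF a, ← hF b, hab]
    exact Subtype.ext (Set.singleton_eq_singleton_iff.mp this)
  calc #(gammaCl X n A) ≤ #(P × T → ↥A) := mk_le_of_injective hinj
    _ = #A ^ #(P × T) := (power_def _ _).symm
    _ = #A ^ (psiGamma X n * tGamma X n) := by
        rw [show #(P × T) = psiGamma X n * tGamma X n by
          simp [Cardinal.mk_prod, hP, hT, mk_out]]

end Key
section Fin

variable {X : Type u} [TopologicalSpace X] {n : ℕ}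

lemma finite_case (hX : ThetaUrysohn X n) (A : Set X) (hfin : (gammaCl X n A).Finite) :
    #(gammaCl X n A) ≤ #A := by
  classical
  choose U V hU hV hxU hyV hdisj using hX
  set G := gammaCl X n A with hG
  set W : X → Set X := fun x =>
    (⋂ y ∈ G, ⋂ (h : x ≠ y), U x y h) ∩ (⋂ y ∈ G, ⋂ (h : y ≠ x), V y x h) with hW
  have hWopen : ∀ x, IsOpen (W x) := by
    intro x
    apply IsOpen.inter
    · exact hfin.isOpen_biInter fun y _ => isOpen_iInter_of_finite fun h => hU x y h
    · exact hfin.isOpen_biInter fun y _ => isOpen_iInter_of_finite fun h => hV y x h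
  have hxW : ∀ x, x ∈ W x := by
    intro x
    constructor
    · exact Set.mem_biInter fun y hy => Set.mem_iInter.mpr fun h => hxU x y h
    · exact Set.mem_biInter fun y hy => Set.mem_iInter.mpr fun h => hyV y x h
  have hWd : ∀ x ∈ G, ∀ y ∈ G, ∀ h : x ≠ y,
      thetaClN X n (W x) ∩ thetaClN X n (W y) = ∅ := by
    intro x hx y hy h
    have h1 : W x ⊆ U x y h := fun z hz =>
      Set.mem_iInter.mp ((Set.mem_iInter₂.mp hz.1) y hy) h
    have h2 : W y ⊆ V x y h := fun z hz =>
      Set.mem_iInter.mp ((Set.mem_iInter₂.mp hz.2) x hx) h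
    have : thetaClN X n (W x) ∩ thetaClN X n (W y) ⊆
        thetaClN X n (U x y h) ∩ thetaClN X n (V x y h) :=
      Set.inter_subset_inter (thetaClN_mono h1) (thetaClN_mono h2)
    rw [hdisj x y h] at this
    exact Set.subset_empty_iff.mp this
  have ha : ∀ x : ↥G, ∃ a : ↥A, (a : X) ∈ thetaClN X n (W x) := by
    rintro ⟨x, hx⟩
    obtain ⟨a, ha1, ha2⟩ := hx (W x) (hWopen x) (hxW x)
    exact ⟨⟨a, ha2⟩, ha1⟩
  choose a haW using ha
  have hinj : Function.Injective a := by
    intro s t hst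
    by_contra hne
    have h' : (s : X) ≠ (t : X) := fun h => hne (Subtype.ext h)
    have : (a s : X) ∈ thetaClN X n (W s) ∩ thetaClN X n (W t) :=
      ⟨haW s, by rw [hst]; exact haW t⟩
    rw [hWd s s.2 t t.2 h'] at this
    exact this
  exact mk_le_of_injective hinj

end Fin
theorem card_gammaCl_le (X : Type u) [TopologicalSpace X] (n : ℕ)
    (hX : ThetaUrysohn X n) (A : Set X) :
    #(gammaCl X n A) ≤ #A ^ (psiGamma X n * tGamma X n) ∧
      (#A ≤ 2 ^ (psiGamma X n * tGamma X n) →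
        #(gammaCl X n A) ≤ 2 ^ (psiGamma X n * tGamma X n)) := by
  set κ := psiGamma X n * tGamma X n with hκ
  have part1 : #(gammaCl X n A) ≤ #A ^ κ := by
    rcases Set.eq_empty_or_nonempty (gammaCl X n A) with hG | hG
    · rw [hG]
      simp only [Cardinal.mk_emptyCollection]
      exact zero_le
    · have hAne : A.Nonempty := by
        obtain ⟨x, hx⟩ := hG
        obtain ⟨b, _, hb⟩ := hx Set.univ isOpen_univ (Set.mem_univ x)
        exact ⟨b, hb⟩
      rcases subsingleton_or_nontrivial X with hs | hnt
      · have h1 : #(gammaCl X n A) ≤ 1 :=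
          mk_le_one_iff_set_subsingleton.mpr fun x _ y _ => Subsingleton.elim x y
        have h2 : (1 : Cardinal) ≤ #A ^ κ :=
          Cardinal.one_le_iff_ne_zero.mpr
            (power_ne_zero _ (mk_ne_zero_iff.mpr hAne.to_subtype))
        exact h1.trans h2
      · exact key_nontrivial hX A
  refine ⟨part1, fun hA => ?_⟩
  rcases lt_or_ge κ ℵ₀ with hfin | hinf
  · have h2 : (2 : Cardinal) < ℵ₀ := by exact_mod_cast Cardinal.nat_lt_aleph0 2
    have hAfin : #A < ℵ₀ := hA.trans_lt (power_lt_aleph0 h2 hfin)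
    have hGfin : (gammaCl X n A).Finite :=
      lt_aleph0_iff_set_finite.mp (part1.trans_lt (power_lt_aleph0 hAfin hfin))
    exact (finite_case hX A hGfin).trans hA
  · calc #(gammaCl X n A) ≤ #A ^ κ := part1
      _ ≤ (2 ^ κ) ^ κ := power_le_power_right hA
      _ = 2 ^ (κ * κ) := (power_mul).symm
      _ = 2 ^ κ := by rw [mul_eq_self hinf]
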